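/- Let k be an algebraically closed field of characteristic 5, δ = y∂_x + (x² + g)∂_y a derivation of k[[x,y]] with g ∈ I₅ (the ideal of weighted degree ≥ 5 for weights deg x = 2, deg y = 3), satisfying δ⁵ = αδ for some α ∈ k[[x,y]]. Then α ∈ I₅, i.e. α lies in the ideal generated by monomials of weighted degree at least 5. -/

import Mathlib

open MvPowerSeries

namespace AlphaI5

variable {k : Type*} [Field k]

/-- `P n f` : every nonzero coefficient of `f` has weighted degree `≥ n`. -/
def P (n : ℕ) (f : MvPowerSeries (Fin 2) k) : Prop :=
  ∀ d : Fin 2 →₀ ℕ, coeff d f ≠ 0 → n ≤ 2 * d 0 + 3 * d 1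

lemma P.mono {m n : ℕ} {f : MvPowerSeries (Fin 2) k} (h : P n f) (hmn : m ≤ n) : P m f :=
  fun d hd => hmn.trans (h d hd)

lemma P.add {n} {f h : MvPowerSeries (Fin 2) k} (hf : P n f) (hh : P n h) : P n (f + h) := by
  intro d hd
  rw [map_add] at hd
  by_cases h1 : coeff d f = 0
  · exact hh d (by simpa [h1] using hd)
  · exact hf d h1

lemma P.mul {m n} {f h : MvPowerSeries (Fin 2) k} (hf : P m f) (hh : P n h) :
    P (m + n) (f * h) := by
  classical
  intro d hd
  rw [coeff_mul] at hd
  obtain ⟨p, hp, hne⟩ := Finset.exists_ne_zero_of_sum_ne_zero hd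
  rw [Finset.HasAntidiagonal.mem_antidiagonal] at hp
  have h1 := hf p.1 (left_ne_zero_of_mul hne)
  have h2 := hh p.2 (right_ne_zero_of_mul hne)
  rw [← hp]
  simp only [Finsupp.add_apply]
  omega

lemma P_monomial (n : ℕ) (d : Fin 2 →₀ ℕ) (a : k) (h : n ≤ 2 * d 0 + 3 * d 1) :
    P n (monomial d a) := by
  classical
  intro e he
  rw [coeff_monomial] at he
  by_cases h1 : e = d
  · subst h1; exact h
  · simp [h1] at he

lemma P_X1 : P 3 (X 1 : MvPowerSeries (Fin 2) k) := by
  rw [X_def]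
  exact P_monomial 3 _ _ (by simp [Finsupp.single_apply])

lemma P_X0sq : P 4 ((X 0 : MvPowerSeries (Fin 2) k) ^ 2) := by
  rw [X_pow_eq]
  exact P_monomial 4 _ _ (by simp [Finsupp.single_apply])

section deriv

variable (dX dY : MvPowerSeries (Fin 2) k → MvPowerSeries (Fin 2) k)
  (hdX : ∀ (f : MvPowerSeries (Fin 2) k) (d : Fin 2 →₀ ℕ),
      coeff d (dX f) = (d 0 + 1 : ℕ) * coeff (d + Finsupp.single 0 1) f)
  (hdY : ∀ (f : MvPowerSeries (Fin 2) k) (d : Fin 2 →₀ ℕ),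
      coeff d (dY f) = (d 1 + 1 : ℕ) * coeff (d + Finsupp.single 1 1) f)

include hdX in
lemma P_dX {n} {f : MvPowerSeries (Fin 2) k} (hf : P n f) : P (n - 2) (dX f) := by
  intro d hd
  rw [hdX] at hd
  have := hf _ (right_ne_zero_of_mul hd)
  simp only [Finsupp.add_apply, Finsupp.single_apply] at this
  norm_num at this
  omega

include hdY in
lemma P_dY {n} {f : MvPowerSeries (Fin 2) k} (hf : P n f) : P (n - 3) (dY f) := by
  intro d hd
  rw [hdY] at hd
  have := hf _ (right_ne_zero_of_mul hd)
  simp only [Finsupp.add_apply, Finsupp.single_apply] at this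
  norm_num at this
  omega

include hdX in
lemma dX_monomial_add (e : Fin 2 →₀ ℕ) (a : k) :
    dX (monomial (e + Finsupp.single 0 1) a) = monomial e (((e 0 + 1 : ℕ) : k) * a) := by
  classical
  ext d
  rw [hdX, coeff_monomial, coeff_monomial]
  by_cases h : d = e
  · subst h; simp
  · rw [if_neg (fun hc => h (add_right_cancel hc)), if_neg h, mul_zero]

include hdY in
lemma dY_monomial_add (e : Fin 2 →₀ ℕ) (a : k) :
    dY (monomial (e + Finsupp.single 1 1) a) = monomial e (((e 1 + 1 : ℕ) : k) * a) := by
  classical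
  ext d
  rw [hdY, coeff_monomial, coeff_monomial]
  by_cases h : d = e
  · subst h; simp
  · rw [if_neg (fun hc => h (add_right_cancel hc)), if_neg h, mul_zero]

include hdX in
lemma dX_monomial_zero (e : Fin 2 →₀ ℕ) (he : e 0 = 0) (a : k) :
    dX (monomial e a) = 0 := by
  classical
  ext d
  rw [hdX, coeff_monomial, if_neg, mul_zero, map_zero]
  intro hc
  have := DFunLike.congr_fun hc 0
  simp [Finsupp.single_apply, he] at this

include hdY in
lemma dY_monomial_zero (e : Fin 2 →₀ ℕ) (he : e 1 = 0) (a : k) :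
    dY (monomial e a) = 0 := by
  classical
  ext d
  rw [hdY, coeff_monomial, if_neg, mul_zero, map_zero]
  intro hc
  have := DFunLike.congr_fun hc 1
  simp [Finsupp.single_apply, he] at this

include hdX in
lemma dX_add (f h : MvPowerSeries (Fin 2) k) : dX (f + h) = dX f + dX h := by
  ext d
  simp only [hdX, map_add, mul_add]

include hdY in
lemma dY_add (f h : MvPowerSeries (Fin 2) k) : dY (f + h) = dY f + dY h := by
  ext d
  simp only [hdY, map_add, mul_add]

variable (g : MvPowerSeries (Fin 2) k)
  (δ : MvPowerSeries (Fin 2) k → MvPowerSeries (Fin 2) k)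
  (hδ : ∀ f, δ f = X 1 * dX f + ((X 0) ^ 2 + g) * dY f)

include hdX hdY hδ in
lemma delta_add (f h : MvPowerSeries (Fin 2) k) : δ (f + h) = δ f + δ h := by
  rw [hδ, hδ, hδ, dX_add dX hdX, dY_add dY hdY]
  ring

include hdX hdY hδ in
lemma P.delta {n} (hg : P 5 g) {f : MvPowerSeries (Fin 2) k} (hf : P n f) :
    P (n + 1) (δ f) := by
  rw [hδ]
  have h1 : P (3 + (n - 2)) (X 1 * dX f) := P_X1.mul (P_dX dX hdX hf)
  have h2 : P (4 + (n - 3)) (((X 0 : MvPowerSeries (Fin 2) k) ^ 2 + g) * dY f) :=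
    (P_X0sq.add (hg.mono (by norm_num))).mul (P_dY dY hdY hf)
  exact (h1.mono (by omega)).add (h2.mono (by omega))

end deriv

end AlphaI5

/-- Let `δ = y ∂_x + (x² + g) ∂_y` be a derivation of `k[[x,y]]` (char `k = 5`, `k`
algebraically closed) with `g` of weighted degree `≥ 5` (weights `deg x = 2`, `deg y = 3`),
and suppose `δ⁵ = α δ`. Then `α` has weighted degree `≥ 5`, i.e. `α ∈ I₅`. -/
theorem alpha_in_I5
    (k : Type*) [Field k] [IsAlgClosed k] [CharP k 5]
    (dX dY : MvPowerSeries (Fin 2) k → MvPowerSeries (Fin 2) k)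
    (hdX : ∀ (f : MvPowerSeries (Fin 2) k) (d : Fin 2 →₀ ℕ),
      coeff d (dX f) = (d 0 + 1 : ℕ) * coeff (d + Finsupp.single 0 1) f)
    (hdY : ∀ (f : MvPowerSeries (Fin 2) k) (d : Fin 2 →₀ ℕ),
      coeff d (dY f) = (d 1 + 1 : ℕ) * coeff (d + Finsupp.single 1 1) f)
    (g : MvPowerSeries (Fin 2) k)
    (hg : ∀ d : Fin 2 →₀ ℕ, coeff d g ≠ 0 → 5 ≤ 2 * d 0 + 3 * d 1)
    (δ : MvPowerSeries (Fin 2) k → MvPowerSeries (Fin 2) k)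
    (hδ : ∀ f, δ f = X 1 * dX f + ((X 0) ^ 2 + g) * dY f)
    (α : MvPowerSeries (Fin 2) k)
    (hpc : ∀ f, δ^[5] f = α * δ f) :
    ∀ d : Fin 2 →₀ ℕ, coeff d α ≠ 0 → 5 ≤ 2 * d 0 + 3 * d 1 := by
  classical
  open AlphaI5 in
  have hgP : P 5 g := hg
  have Pδ : ∀ {n} {f : MvPowerSeries (Fin 2) k}, P n f → P (n + 1) (δ f) :=
    fun hf => P.delta dX dY hdX hdY g δ hδ hgP hf
  have δadd := delta_add dX dY hdX hdY g δ hδ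
  -- δ x = y
  have h1 : δ (X 0) = (X 1 : MvPowerSeries (Fin 2) k) := by
    rw [hδ, X_def (0 : Fin 2),
      show Finsupp.single (0 : Fin 2) (1 : ℕ) = 0 + Finsupp.single 0 1 by rw [zero_add],
      dX_monomial_add dX hdX 0 1,
      dY_monomial_zero dY hdY _ (by simp) 1]
    simp [X_def, monomial_zero_one]
  -- δ y = x² + g
  have h2 : δ (X 1) = (X 0 : MvPowerSeries (Fin 2) k) ^ 2 + g := by
    rw [hδ, X_def (1 : Fin 2),
      show Finsupp.single (1 : Fin 2) (1 : ℕ) = 0 + Finsupp.single 1 1 by rw [zero_add],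
      dY_monomial_add dY hdY 0 1,
      dX_monomial_zero dX hdX _ (by simp [Finsupp.single_apply]) 1]
    simp [monomial_zero_one]
  -- δ (x²) = 2xy
  have h3 : δ ((X 0 : MvPowerSeries (Fin 2) k) ^ 2)
      = monomial (Finsupp.single 0 1 + Finsupp.single 1 1) (2 : k) := by
    rw [hδ, X_pow_eq,
      show Finsupp.single (0 : Fin 2) (2 : ℕ)
        = Finsupp.single 0 1 + Finsupp.single 0 1 by rw [← Finsupp.single_add],
      dX_monomial_add dX hdX (Finsupp.single 0 1) 1,
      dY_monomial_zero dY hdY _ (by simp [Finsupp.single_apply]) 1]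
    rw [X_def (1 : Fin 2), monomial_mul_monomial]
    simp [add_comm (Finsupp.single (1 : Fin 2) (1:ℕ)) (Finsupp.single 0 1)]
  -- δ (2xy) = 2y² + 2x³ + 2xg
  have h4 : δ (monomial (Finsupp.single 0 1 + Finsupp.single 1 1) (2 : k))
      = monomial (Finsupp.single 1 2) (2 : k) + monomial (Finsupp.single 0 3) (2 : k)
        + g * monomial (Finsupp.single 0 1) (2 : k) := by
    rw [hδ,
      show Finsupp.single (0 : Fin 2) (1:ℕ) + Finsupp.single 1 1
        = Finsupp.single 1 1 + Finsupp.single 0 1 by rw [add_comm]]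
    rw [dX_monomial_add dX hdX (Finsupp.single 1 1) 2]
    rw [show Finsupp.single (1 : Fin 2) (1:ℕ) + Finsupp.single 0 1
        = Finsupp.single 0 1 + Finsupp.single 1 1 by rw [add_comm]]
    rw [dY_monomial_add dY hdY (Finsupp.single 0 1) 2]
    rw [X_def (1 : Fin 2), X_pow_eq, add_mul, monomial_mul_monomial, monomial_mul_monomial]
    simp only [Finsupp.single_apply]
    norm_num
    rw [show (Finsupp.single (1:Fin 2) 1 + Finsupp.single 1 1 : Fin 2 →₀ ℕ)
        = Finsupp.single 1 2 by rw [← Finsupp.single_add],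
      show (Finsupp.single (0:Fin 2) 2 + Finsupp.single 0 1 : Fin 2 →₀ ℕ)
        = Finsupp.single 0 3 by rw [← Finsupp.single_add]]
    ring
  -- δ (2y²) = 4x²y + 4gy
  have h5 : δ (monomial (Finsupp.single 1 2) (2 : k))
      = monomial (Finsupp.single 0 2 + Finsupp.single 1 1) (4 : k)
        + g * monomial (Finsupp.single 1 1) (4 : k) := by
    rw [hδ,
      show Finsupp.single (1 : Fin 2) (2 : ℕ)
        = Finsupp.single 1 1 + Finsupp.single 1 1 by rw [← Finsupp.single_add],
      dY_monomial_add dY hdY (Finsupp.single 1 1) 2,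
      dX_monomial_zero dX hdX _ (by simp [Finsupp.single_apply]) 2]
    rw [X_pow_eq, add_mul, monomial_mul_monomial]
    simp only [Finsupp.single_apply]
    norm_num
  -- δ (2x³) = 6x²y
  have h6 : δ (monomial (Finsupp.single 0 3) (2 : k))
      = monomial (Finsupp.single 0 2 + Finsupp.single 1 1) (6 : k) := by
    rw [hδ,
      show Finsupp.single (0 : Fin 2) (3 : ℕ)
        = Finsupp.single 0 2 + Finsupp.single 0 1 by rw [← Finsupp.single_add],
      dX_monomial_add dX hdX (Finsupp.single 0 2) 2,
      dY_monomial_zero dY hdY _ (by simp [Finsupp.single_apply]) 2]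
    rw [X_def (1 : Fin 2), monomial_mul_monomial]
    simp only [Finsupp.single_apply]
    norm_num
    rw [add_comm (Finsupp.single (1 : Fin 2) (1:ℕ)) (Finsupp.single 0 2)]
  -- key : δ⁵ x has weighted degree ≥ 8
  have key : P 8 (δ (δ (δ (δ (δ (X 0 : MvPowerSeries (Fin 2) k)))))) := by
    rw [h1, h2, δadd, h3, δadd, h4]
    rw [δadd, δadd, δadd, h5, h6]
    have hmono10 : monomial (Finsupp.single 0 2 + Finsupp.single 1 1 : Fin 2 →₀ ℕ) (4 : k)
        + monomial (Finsupp.single 0 2 + Finsupp.single 1 1 : Fin 2 →₀ ℕ) (6 : k) = 0 := by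
      rw [← map_add]
      have h10 : (4 : k) + 6 = 0 := by
        have : ((10 : ℕ) : k) = 0 := (CharP.cast_eq_zero_iff k 5 10).mpr (by norm_num)
        push_cast at this
        linear_combination this
      rw [h10, map_zero]
    have hδg : P 6 (δ g) := Pδ hgP
    have hδδg : P 7 (δ (δ g)) := Pδ hδg
    have hδ3g : P 8 (δ (δ (δ g))) := Pδ hδδg
    have hgm1 : P 8 (g * monomial (Finsupp.single 1 1) (4 : k)) :=
      hgP.mul (P_monomial 3 _ _ (by simp [Finsupp.single_apply]))
    have hgm2 : P 7 (g * monomial (Finsupp.single 0 1) (2 : k)) :=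
      hgP.mul (P_monomial 2 _ _ (by simp [Finsupp.single_apply]))
    have hδgm2 : P 8 (δ (g * monomial (Finsupp.single 0 1) (2 : k))) := Pδ hgm2
    have : monomial (Finsupp.single 0 2 + Finsupp.single 1 1) (4 : k)
        + g * monomial (Finsupp.single 1 1) (4 : k)
        + monomial (Finsupp.single 0 2 + Finsupp.single 1 1) (6 : k)
        + δ (g * monomial (Finsupp.single 0 1) (2 : k)) + δ (δ (δ g))
        = g * monomial (Finsupp.single 1 1) (4 : k)
          + δ (g * monomial (Finsupp.single 0 1) (2 : k)) + δ (δ (δ g)) := by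
      linear_combination hmono10
    rw [this]
    exact (hgm1.add hδgm2).add hδ3g
  -- identify δ⁵ x with α * y
  have hiter : δ^[5] (X 0 : MvPowerSeries (Fin 2) k)
      = δ (δ (δ (δ (δ (X 0 : MvPowerSeries (Fin 2) k))))) := by
    simp [Function.iterate_succ_apply']
  have hαy : P 8 (α * (X 1 : MvPowerSeries (Fin 2) k)) := by
    rw [← h1, ← hpc (X 0), hiter]
    exact key
  intro d hd
  have hcoeff : coeff (d + Finsupp.single 1 1) (α * (X 1 : MvPowerSeries (Fin 2) k))
      = coeff d α := by
    rw [X_def, coeff_mul_monomial, if_pos le_add_self, add_tsub_cancel_right, mul_one]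
  have := hαy (d + Finsupp.single 1 1) (by rw [hcoeff]; exact hd)
  simp only [Finsupp.add_apply, Finsupp.single_apply] at this
  norm_num at this
  omega
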